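/- Let (ξ_k, η_k)_{k≥1} be an i.i.d. sequence of pairs of real random variables such that ξ₁ is integrable with mean φ = E[ξ₁] and the positive part η₁⁺ is integrable. Set S_k = ξ₁ + ⋯ + ξ_k. Then the sequence (1/n)·max_{1≤k≤n} (S_k + η_k)⁺ converges to φ⁺ = max(φ, 0) both almost surely and in L¹ as n → ∞. -/

import Mathlib

open MeasureTheory ProbabilityTheory Filter Topology

lemma aux_cesaro_diff (v : ℕ → ℝ) (m : ℝ)
    (h : Tendsto (fun n : ℕ => (∑ k ∈ Finset.range n, v k) / n) atTop (𝓝 m)) :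
    Tendsto (fun n : ℕ => v n / ((n : ℝ) + 1)) atTop (𝓝 0) := by
  have h1 : Tendsto (fun n : ℕ => (∑ k ∈ Finset.range (n + 1), v k) / ((n : ℝ) + 1))
      atTop (𝓝 m) := by
    have := h.comp (tendsto_add_atTop_nat 1)
    convert this using 2 with n
    simp only [Function.comp]
    push_cast
    ring_nf
  have h2 : Tendsto (fun n : ℕ => ((∑ k ∈ Finset.range n, v k) / n) * ((n : ℝ) / ((n : ℝ) + 1)))
      atTop (𝓝 (m * 1)) := h.mul (tendsto_natCast_div_add_atTop (1 : ℝ))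
  have h3 := h1.sub h2
  rw [mul_one, sub_self] at h3
  apply h3.congr
  intro n
  rcases Nat.eq_zero_or_pos n with hn | hn
  · subst hn; simp
  · have hn' : (n : ℝ) ≠ 0 := Nat.cast_ne_zero.2 hn.ne'
    rw [Finset.sum_range_succ]
    field_simp
    ring


lemma aux_sup_div (v : ℕ → ℝ) (hv : ∀ k, 0 ≤ v k) (M : ℝ)
    (h : Tendsto (fun k : ℕ => v k / ((k : ℝ) + 1)) atTop (𝓝 M)) :
    Tendsto (fun n : ℕ => (⨆ k : Fin n, v k) / n) atTop (𝓝 M) := by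
  have hM : 0 ≤ M := ge_of_tendsto' h fun k => div_nonneg (hv k) (by positivity)
  rw [Metric.tendsto_atTop]
  intro ε hε
  obtain ⟨K, hK⟩ := (Metric.tendsto_atTop.1 h) (ε / 3) (by positivity)
  set C : ℝ := ∑ k ∈ Finset.range K, v k with hC
  have hCnn : 0 ≤ C := Finset.sum_nonneg fun k _ => hv k
  obtain ⟨N₀, hN₀⟩ := exists_nat_gt (3 * C / ε)
  refine ⟨max (K + 1) (N₀ + 1), fun n hn => ?_⟩
  have hnK : K + 1 ≤ n := le_trans (le_max_left _ _) hn
  have hnN : N₀ + 1 ≤ n := le_trans (le_max_right _ _) hn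
  have hn1 : 1 ≤ n := le_trans (Nat.le_add_left 1 K) hnK
  have hnpos : (0 : ℝ) < n := by exact_mod_cast hn1
  haveI : Nonempty (Fin n) := ⟨⟨0, hn1⟩⟩
  have hCn : C ≤ ε / 3 * n := by
    have : 3 * C / ε < n := lt_of_lt_of_le hN₀ (by exact_mod_cast le_trans (Nat.le_succ _) hnN)
    calc C = 3 * C / ε * (ε / 3) := by field_simp
    _ ≤ (n : ℝ) * (ε / 3) := by
        apply mul_le_mul_of_nonneg_right this.le (by positivity)
    _ = ε / 3 * n := by ring
  -- upper bound
  have hub : (⨆ k : Fin n, v k) ≤ (M + 2 * (ε / 3)) * n := by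
    apply ciSup_le
    intro k
    rcases lt_or_ge k.1 K with hk | hk
    · calc v k.1 ≤ C := Finset.single_le_sum (fun i _ => hv i) (Finset.mem_range.2 hk)
      _ ≤ ε / 3 * n := hCn
      _ ≤ (M + 2 * (ε / 3)) * n := by nlinarith
    · have := hK k.1 hk
      rw [Real.dist_eq, abs_sub_lt_iff] at this
      have h1 : v k.1 < (M + ε / 3) * ((k : ℝ) + 1) := by
        have hkpos : (0 : ℝ) < (k.1 : ℝ) + 1 := by positivity
        rw [← div_lt_iff₀ hkpos] at *
        linarith [this.1]
      have hk1n : ((k.1 : ℝ) + 1) ≤ n := by exact_mod_cast k.2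
      calc v k.1 ≤ (M + ε / 3) * ((k.1 : ℝ) + 1) := h1.le
      _ ≤ (M + ε / 3) * n := by nlinarith
      _ ≤ (M + 2 * (ε / 3)) * n := by nlinarith
  -- lower bound
  have hlb : (M - ε / 3) * n < (⨆ k : Fin n, v k) := by
    have hKn : K ≤ n - 1 := by omega
    have := hK (n - 1) hKn
    rw [Real.dist_eq, abs_sub_lt_iff] at this
    have hcast : ((n - 1 : ℕ) : ℝ) + 1 = (n : ℝ) := by
      have : n - 1 + 1 = n := Nat.succ_pred_eq_of_pos hn1
      exact_mod_cast congrArg (Nat.cast (R := ℝ)) this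
    have h2 : (M - ε / 3) * n < v (n - 1) := by
      have h3 := this.2
      rw [hcast] at h3
      have h4 : M - ε / 3 < v (n - 1) / n := by linarith
      calc (M - ε / 3) * n < v (n - 1) / n * n := mul_lt_mul_of_pos_right h4 hnpos
      _ = v (n - 1) := div_mul_cancel₀ _ hnpos.ne'
    calc (M - ε / 3) * n < v (n - 1) := h2
    _ ≤ ⨆ k : Fin n, v k := by
        apply le_ciSup (f := fun k : Fin n => v k.1) (Set.Finite.bddAbove (Set.finite_range _))
          ⟨n - 1, by omega⟩
  rw [Real.dist_eq, abs_sub_lt_iff]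
  constructor
  · rw [sub_lt_iff_lt_add, div_lt_iff₀ hnpos]
    calc (⨆ k : Fin n, v k) ≤ (M + 2 * (ε / 3)) * n := hub
    _ < (ε + M) * n := by nlinarith
  · rw [sub_lt_iff_lt_add, ← sub_lt_iff_lt_add', lt_div_iff₀ hnpos]
    nlinarith [hlb]

lemma aux_omega (sξ : ℕ → ℝ) (e : ℕ → ℝ) (ι : ℕ → ℝ) (φ p : ℝ) (j : ℕ) (mη : ℝ)
    (hppos : 0 < p)
    (hι : ∀ k, ι k = if -(j : ℝ) ≤ e k then (1 : ℝ) else 0)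
    (h1 : Tendsto (fun k : ℕ => sξ k / ((k : ℝ) + 1)) atTop (𝓝 φ))
    (hω2 : Tendsto (fun n : ℕ => (∑ k ∈ Finset.range n, max (e k) 0) / n) atTop (𝓝 mη))
    (hω3 : Tendsto (fun n : ℕ => (∑ k ∈ Finset.range n, ι k) / n) atTop (𝓝 p)) :
    Tendsto (fun n : ℕ => (⨆ k : Fin n, max (sξ k.1 + e k.1) 0) / n) atTop (𝓝 (max φ 0)) := by
  have hιnn : ∀ k, 0 ≤ ι k := by
    intro k
    rw [hι k]
    by_cases h : -(j : ℝ) ≤ e k <;> simp [h]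
  have hUsup : Tendsto (fun n : ℕ => (⨆ k : Fin n, max (sξ k.1) 0) / n) atTop (𝓝 (max φ 0)) := by
    apply aux_sup_div _ (fun k => le_max_right _ _)
    have hmax : Tendsto (fun k : ℕ => max (sξ k / ((k : ℝ) + 1)) 0) atTop (𝓝 (max φ 0)) :=
      h1.max tendsto_const_nhds
    apply hmax.congr
    intro k
    rw [← max_div_div_right (by positivity : (0:ℝ) ≤ (k : ℝ) + 1), zero_div]
  have hVsup : Tendsto (fun n : ℕ => (⨆ k : Fin n, max (e k.1) 0) / n) atTop (𝓝 0) :=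
    aux_sup_div _ (fun k => le_max_right _ _) 0 (aux_cesaro_diff _ mη hω2)
  rw [tendsto_order]
  constructor
  · -- lower bound
    intro b hb
    rcases le_or_gt φ 0 with hφ0 | hφ0
    · rw [max_eq_right hφ0] at hb
      filter_upwards with n
      calc b < 0 := hb
      _ ≤ (⨆ k : Fin n, max (sξ k.1 + e k.1) 0) / n :=
        div_nonneg (Real.iSup_nonneg fun k => le_max_right _ _) (Nat.cast_nonneg n)
    · rw [max_eq_left hφ0.le] at hb
      set ε : ℝ := min ((φ - b) / 4) (φ / 2) with hεdef
      have hεpos : 0 < ε := lt_min (by linarith) (by linarith)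
      have hεb : b < φ - 3 * ε := by
        have hh : ε ≤ (φ - b) / 4 := min_le_left _ _
        linarith
      have hεφ : ε ≤ φ / 2 := min_le_right _ _
      set δ : ℝ := ε / φ with hδdef
      have hδpos : 0 < δ := div_pos hεpos hφ0
      have hδhalf : δ ≤ 1 / 2 := by
        rw [hδdef, div_le_div_iff₀ hφ0 (by norm_num)]
        linarith
      have hδφ : δ * φ = ε := div_mul_cancel₀ ε hφ0.ne'
      set m : ℕ → ℕ := fun n => ⌈(1 - δ) * n⌉₊ with hmdef
      have hmlb : ∀ n : ℕ, (1 - δ) * n ≤ m n := fun n => Nat.le_ceil _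
      have hmub : ∀ n : ℕ, (m n : ℝ) < (1 - δ) * n + 1 :=
        fun n => Nat.ceil_lt_add_one (mul_nonneg (by linarith) (Nat.cast_nonneg n))
      have hmlen : ∀ n : ℕ, m n ≤ n := by
        intro n
        rw [hmdef, Nat.ceil_le]
        calc (1 - δ) * n ≤ 1 * n :=
          mul_le_mul_of_nonneg_right (by linarith) (Nat.cast_nonneg n)
        _ = n := one_mul _
      have hmtop : Tendsto m atTop atTop := by
        apply tendsto_atTop_atTop.2
        intro c
        refine ⟨2 * c, fun n hn => ?_⟩
        have h2 : (c : ℝ) ≤ (1 - δ) * n := by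
          have h3 : (2 * c : ℝ) ≤ (n : ℝ) := by exact_mod_cast hn
          nlinarith
        exact_mod_cast h2.trans (hmlb n)
      have hratio : Tendsto (fun n : ℕ => (m n : ℝ) / n) atTop (𝓝 (1 - δ)) := by
        have hup : Tendsto (fun n : ℕ => (1 - δ) + 1 / (n : ℝ)) atTop (𝓝 (1 - δ)) := by
          have h0 := (tendsto_const_nhds :
            Tendsto (fun _ : ℕ => (1 - δ)) atTop (𝓝 (1 - δ))).add
            tendsto_one_div_atTop_nhds_zero_nat
          rwa [add_zero] at h0
        apply tendsto_of_tendsto_of_tendsto_of_le_of_le' tendsto_const_nhds hup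
        · filter_upwards [eventually_ge_atTop 1] with n hn
          have hnpos : (0 : ℝ) < n := by exact_mod_cast hn
          rw [le_div_iff₀ hnpos]
          exact hmlb n
        · filter_upwards [eventually_ge_atTop 1] with n hn
          have hnpos : (0 : ℝ) < n := by exact_mod_cast hn
          rw [div_le_iff₀ hnpos]
          calc (m n : ℝ) ≤ (1 - δ) * n + 1 := (hmub n).le
          _ ≤ ((1 - δ) + 1 / n) * n := by
              rw [add_mul, div_mul_cancel₀ _ hnpos.ne']
      have hAm : Tendsto (fun n : ℕ => (∑ k ∈ Finset.range (m n), ι k) / (m n : ℝ)) atTop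
          (𝓝 p) := hω3.comp hmtop
      have hAm2 : Tendsto (fun n : ℕ => (∑ k ∈ Finset.range (m n), ι k) / (n : ℝ)) atTop
          (𝓝 (p * (1 - δ))) := by
        apply (hAm.mul hratio).congr'
        filter_upwards [hmtop.eventually (eventually_ge_atTop 1), eventually_ge_atTop 1]
          with n hmn hn
        have hm0 : (m n : ℝ) ≠ 0 := by positivity
        have hn0 : (n : ℝ) ≠ 0 := by positivity
        field_simp
      have hdiff : Tendsto (fun n : ℕ =>
          (∑ k ∈ Finset.range n, ι k) / n - (∑ k ∈ Finset.range (m n), ι k) / n) atTop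
          (𝓝 (p * δ)) := by
        have := hω3.sub hAm2
        have heq : p - p * (1 - δ) = p * δ := by ring
        rwa [heq] at this
      have hev : ∀ᶠ n : ℕ in atTop, ∃ k, m n ≤ k ∧ k < n ∧ -(j : ℝ) ≤ e k := by
        filter_upwards [hdiff.eventually_const_lt (by positivity : (0:ℝ) < p * δ),
          eventually_ge_atTop 1] with n hpos1 hn1
        have hnpos : (0 : ℝ) < n := by exact_mod_cast hn1
        have hnum : 0 < ∑ k ∈ Finset.range n, ι k - ∑ k ∈ Finset.range (m n), ι k := by
          have h4 : 0 < (∑ k ∈ Finset.range n, ι k - ∑ k ∈ Finset.range (m n), ι k) / n := by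
            rw [sub_div]; linarith
          by_contra h5
          push_neg at h5
          have := div_nonpos_of_nonpos_of_nonneg h5 hnpos.le
          linarith
        rw [← Finset.sum_Ico_eq_sub _ (hmlen n)] at hnum
        by_contra hcon
        push_neg at hcon
        rw [Finset.sum_eq_zero] at hnum
        · exact lt_irrefl 0 hnum
        · intro k hk
          rw [Finset.mem_Ico] at hk
          rw [hι k, if_neg]
          exact not_le.mpr (hcon k hk.1 hk.2)
      have hKev : ∀ᶠ k : ℕ in atTop, (φ - ε) * ((k : ℝ) + 1) ≤ sξ k := by
        filter_upwards [h1.eventually_const_lt (show φ - ε < φ by linarith)] with k hk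
        have hkpos : (0 : ℝ) < (k : ℝ) + 1 := by positivity
        rw [lt_div_iff₀ hkpos] at hk
        linarith
      obtain ⟨K, hK⟩ := eventually_atTop.1 hKev
      have hmK : ∀ᶠ n : ℕ in atTop, K ≤ m n := hmtop.eventually (eventually_ge_atTop K)
      have hjn : ∀ᶠ n : ℕ in atTop, (j : ℝ) / n ≤ ε :=
        (tendsto_const_div_atTop_nhds_zero_nat (j : ℝ)).eventually (eventually_le_nhds hεpos)
      filter_upwards [hev, hmK, hjn, eventually_ge_atTop 1] with n hex hmKn hjn1 hn1
      obtain ⟨k, hk1, hk2, hk3⟩ := hex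
      have hnpos : (0 : ℝ) < n := by exact_mod_cast hn1
      have hs : (φ - ε) * ((k : ℝ) + 1) ≤ sξ k := hK k (le_trans hmKn hk1)
      have hk1n : (1 - δ) * n ≤ (k : ℝ) + 1 := by
        have : (m n : ℝ) ≤ k := by exact_mod_cast hk1
        have := hmlb n
        linarith
      have hφε : (0 : ℝ) ≤ φ - ε := by linarith
      have hjle : (j : ℝ) ≤ ε * n := by
        rw [div_le_iff₀ hnpos] at hjn1
        linarith
      have hPk : (φ - 3 * ε) * n ≤ sξ k + e k := by
        have hmul : (φ - ε) * ((1 - δ) * n) ≤ (φ - ε) * ((k : ℝ) + 1) :=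
          mul_le_mul_of_nonneg_left hk1n hφε
        nlinarith [hδpos, hεpos, hnpos, hδφ, hk3]
      have hfinal : (φ - 3 * ε) ≤ (⨆ k : Fin n, max (sξ k.1 + e k.1) 0) / n := by
        rw [le_div_iff₀ hnpos]
        calc (φ - 3 * ε) * n ≤ sξ k + e k := hPk
        _ ≤ max (sξ k + e k) 0 := le_max_left _ _
        _ ≤ ⨆ k : Fin n, max (sξ k.1 + e k.1) 0 :=
            le_ciSup (f := fun k : Fin n => max (sξ k.1 + e k.1) 0)
              (Set.Finite.bddAbove (Set.finite_range _)) ⟨k, hk2⟩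
      linarith
  · -- upper bound
    intro b hb
    have hsum : Tendsto (fun n : ℕ => (⨆ k : Fin n, max (sξ k.1) 0) / n
        + (⨆ k : Fin n, max (e k.1) 0) / n) atTop (𝓝 (max φ 0)) := by
      have := hUsup.add hVsup
      rwa [add_zero] at this
    filter_upwards [hsum.eventually_lt_const hb, eventually_ge_atTop 1] with n hn hn1
    refine lt_of_le_of_lt ?_ hn
    haveI : Nonempty (Fin n) := ⟨⟨0, hn1⟩⟩
    have hnn : (0 : ℝ) ≤ n := Nat.cast_nonneg n
    rw [← add_div]
    gcongr
    apply ciSup_le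
    intro k
    have hA : sξ k.1 ≤ ⨆ k : Fin n, max (sξ k.1) 0 :=
      le_trans (le_max_left _ _)
        (le_ciSup (f := fun k : Fin n => max (sξ k.1) 0)
          (Set.Finite.bddAbove (Set.finite_range _)) k)
    have hB : e k.1 ≤ ⨆ k : Fin n, max (e k.1) 0 :=
      le_trans (le_max_left _ _)
        (le_ciSup (f := fun k : Fin n => max (e k.1) 0)
          (Set.Finite.bddAbove (Set.finite_range _)) k)
    apply max_le (by linarith)
    have h0A : (0:ℝ) ≤ ⨆ k : Fin n, max (sξ k.1) 0 :=
      Real.iSup_nonneg fun k => le_max_right _ _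
    have h0B : (0:ℝ) ≤ ⨆ k : Fin n, max (e k.1) 0 :=
      Real.iSup_nonneg fun k => le_max_right _ _
    linarith


lemma aux_slln {Ω : Type*} [MeasureSpace Ω] [IsProbabilityMeasure (ℙ : Measure Ω)]
    (ξ η : ℕ → Ω → ℝ)
    (hindep : iIndepFun (fun n ω => (ξ n ω, η n ω)) ℙ)
    (hident : ∀ n, IdentDistrib (fun ω => (ξ n ω, η n ω)) (fun ω => (ξ 0 ω, η 0 ω)) ℙ ℙ)
    (g : ℝ × ℝ → ℝ) (hg : Measurable g)
    (hint : Integrable (fun ω => g (ξ 0 ω, η 0 ω)) ℙ) :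
    ∀ᵐ ω ∂ℙ, Tendsto (fun n : ℕ => (∑ k ∈ Finset.range n, g (ξ k ω, η k ω)) / n) atTop
      (𝓝 (∫ ω, g (ξ 0 ω, η 0 ω) ∂ℙ)) := by
  exact strong_law_ae_real (fun k ω => g (ξ k ω, η k ω)) hint
    (fun i j hij => (hindep.indepFun hij).comp hg hg)
    (fun i => (hident i).comp hg)


/-- Let `(ξ_k, η_k)_{k≥1}` be an i.i.d. sequence of pairs of real
random variables such that `ξ₁` is integrable with mean `φ = E[ξ₁]` and `η₁⁺` is
integrable.  With `S_k = ξ₁ + ⋯ + ξ_k`, the sequence `(1/n) max_{1≤k≤n} (S_k + η_k)⁺`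
converges to `φ⁺ = max(φ, 0)` almost surely and in `L¹`.  (Here the maximum over
`1 ≤ k ≤ n` is expressed as `⨆ k : Fin n`, with `S_{k+1} = Σ_{i≤k} ξ_i` and the pair
`(ξ, η)` of the same index.) -/
theorem statement16
    {Ω : Type*} [MeasureSpace Ω] [IsProbabilityMeasure (ℙ : Measure Ω)]
    (ξ η : ℕ → Ω → ℝ)
    (hmeas : ∀ n, Measurable fun ω => (ξ n ω, η n ω))
    (hindep : iIndepFun (fun n ω => (ξ n ω, η n ω)) ℙ)
    (hident : ∀ n, IdentDistrib (fun ω => (ξ n ω, η n ω)) (fun ω => (ξ 0 ω, η 0 ω)) ℙ ℙ)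
    (hIntξ : Integrable (ξ 0) ℙ)
    (hIntη : Integrable (fun ω => max (η 0 ω) 0) ℙ)
    (φ : ℝ) (hφ : φ = ∫ ω, ξ 0 ω ∂ℙ) :
    (∀ᵐ ω ∂ℙ,
      Tendsto (fun n : ℕ =>
          (⨆ k : Fin n, max (∑ i ∈ Finset.range (k.1 + 1), ξ i ω + η k.1 ω) 0) / n)
        atTop (𝓝 (max φ 0))) ∧
    Tendsto (fun n : ℕ =>
        ∫ ω, |(⨆ k : Fin n, max (∑ i ∈ Finset.range (k.1 + 1), ξ i ω + η k.1 ω) 0) / n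
          - max φ 0| ∂ℙ)
      atTop (𝓝 0) := by
  have hmξ : ∀ n, Measurable (ξ n) := fun n => (measurable_fst.comp (hmeas n))
  have hmη : ∀ n, Measurable (η n) := fun n => (measurable_snd.comp (hmeas n))
  set P : ℕ → Ω → ℝ := fun k ω => max (∑ i ∈ Finset.range (k + 1), ξ i ω + η k ω) 0 with hP
  set Y : ℕ → Ω → ℝ := fun n ω => ⨆ k : Fin n, P k.1 ω with hY
  have hPnn : ∀ k ω, 0 ≤ P k ω := fun k ω => le_max_right _ _
  have hYnn : ∀ n ω, 0 ≤ Y n ω := fun n ω => Real.iSup_nonneg fun k => hPnn _ ω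
  -- choice of j
  obtain ⟨j, hj⟩ : ∃ j : ℕ, ℙ {ω | -(j : ℝ) ≤ η 0 ω} ≠ 0 := by
    by_contra hcon
    push_neg at hcon
    have hU : (⋃ j : ℕ, {ω | -(j : ℝ) ≤ η 0 ω}) = Set.univ := by
      ext ω
      simp only [Set.mem_iUnion, Set.mem_setOf_eq, Set.mem_univ, iff_true]
      obtain ⟨j, hj⟩ := exists_nat_ge (-(η 0 ω))
      exact ⟨j, by linarith⟩
    have h0 := measure_iUnion_null hcon
    rw [hU, measure_univ] at h0
    exact one_ne_zero h0
  set p : ℝ := (ℙ {ω | -(j : ℝ) ≤ η 0 ω}).toReal with hpdef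
  have hppos : 0 < p := ENNReal.toReal_pos hj (measure_ne_top _ _)
  -- SLLN events
  have E1 : ∀ᵐ ω ∂ℙ, Tendsto (fun n : ℕ => (∑ k ∈ Finset.range n, ξ k ω) / n) atTop (𝓝 φ) := by
    have h0 := aux_slln ξ η hindep hident (fun q => q.1) measurable_fst hIntξ
    rw [← hφ] at h0
    exact h0
  set mη : ℝ := ∫ ω, max (η 0 ω) 0 ∂ℙ with hmη_def
  have E2 : ∀ᵐ ω ∂ℙ, Tendsto (fun n : ℕ => (∑ k ∈ Finset.range n, max (η k ω) 0) / n) atTop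
      (𝓝 mη) :=
    aux_slln ξ η hindep hident (fun q => max q.2 0) (measurable_snd.max measurable_const) hIntη
  set mabs : ℝ := ∫ ω, |ξ 0 ω| ∂ℙ with hmabs_def
  have E4 : ∀ᵐ ω ∂ℙ, Tendsto (fun n : ℕ => (∑ k ∈ Finset.range n, |ξ k ω|) / n) atTop
      (𝓝 mabs) :=
    aux_slln ξ η hindep hident (fun q => |q.1|) measurable_fst.abs hIntξ.abs
  set ι : ℕ → Ω → ℝ := fun k ω => if -(j : ℝ) ≤ η k ω then (1 : ℝ) else 0 with hι
  have hgιmeas : Measurable (fun q : ℝ × ℝ => if -(j : ℝ) ≤ q.2 then (1 : ℝ) else 0) :=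
    Measurable.ite (measurableSet_le measurable_const measurable_snd)
      measurable_const measurable_const
  have hsmeas : MeasurableSet {ω | -(j : ℝ) ≤ η 0 ω} :=
    measurableSet_le measurable_const (hmη 0)
  have hιint : Integrable (ι 0) ℙ := by
    refine Integrable.mono' (integrable_const 1) ?_ (ae_of_all _ fun ω => ?_)
    · exact ((hgιmeas.comp (hmeas 0)).aestronglyMeasurable)
    · by_cases h : -(j : ℝ) ≤ η 0 ω <;> simp [hι, h]
  have hιint_eq : ∫ ω, ι 0 ω ∂ℙ = p := by
    have heq : (fun ω => ι 0 ω) =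
        Set.indicator {ω | -(j : ℝ) ≤ η 0 ω} (fun _ => (1 : ℝ)) := by
      ext ω
      by_cases h : -(j : ℝ) ≤ η 0 ω <;> simp [hι, Set.indicator_apply, h]
    rw [heq, integral_indicator_const _ hsmeas]
    simp [hpdef, measureReal_def]
  have E3 : ∀ᵐ ω ∂ℙ, Tendsto (fun n : ℕ => (∑ k ∈ Finset.range n, ι k ω) / n) atTop (𝓝 p) := by
    have h0 := aux_slln ξ η hindep hident (fun q => if -(j : ℝ) ≤ q.2 then (1 : ℝ) else 0)
      hgιmeas hιint
    rw [hιint_eq] at h0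
    exact h0
  -- almost sure convergence
  have main : ∀ᵐ ω ∂ℙ, Tendsto (fun n : ℕ => Y n ω / n) atTop (𝓝 (max φ 0)) := by
    filter_upwards [E1, E2, E3] with ω hω1 hω2 hω3
    have h1 : Tendsto (fun k : ℕ => (∑ i ∈ Finset.range (k + 1), ξ i ω) / ((k : ℝ) + 1))
        atTop (𝓝 φ) := by
      have h0 := hω1.comp (tendsto_add_atTop_nat 1)
      apply h0.congr
      intro k
      simp only [Function.comp]
      push_cast
      ring_nf
    exact aux_omega (fun k => ∑ i ∈ Finset.range (k + 1), ξ i ω) (fun k => η k ω)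
      (fun k => ι k ω) φ p j mη hppos (fun k => rfl) h1 hω2 hω3
  refine ⟨main, ?_⟩
  -- L¹ convergence
  set c : ℝ := max φ 0 with hc
  have hcnn : 0 ≤ c := le_max_right _ _
  have hPmeas : ∀ k, Measurable (P k) := fun k =>
    ((Finset.measurable_sum _ fun i _ => hmξ i).add (hmη k)).max measurable_const
  have hYmeas : ∀ n, Measurable (Y n) := by
    intro n
    rcases Nat.eq_zero_or_pos n with rfl | hn
    · have h0 : Y 0 = fun _ => (0 : ℝ) := by
        funext ω
        exact Real.iSup_of_isEmpty _
      rw [h0]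
      exact measurable_const
    · haveI : Nonempty (Fin n) := ⟨⟨0, hn⟩⟩
      have h0 : Y n = Finset.univ.sup' Finset.univ_nonempty
          (fun k : Fin n => fun ω => P k.1 ω) := by
        funext ω
        rw [Finset.sup'_apply, Finset.sup'_univ_eq_ciSup]
      rw [h0]
      exact Finset.measurable_sup' Finset.univ_nonempty (fun k _ => hPmeas k.1)
  set Z : ℕ → Ω → ℝ := fun n ω => ∑ i ∈ Finset.range n, (|ξ i ω| + max (η i ω) 0) with hZ
  have hZmeas : ∀ n, Measurable (Z n) := fun n =>
    Finset.measurable_sum _ fun i _ => ((hmξ i).abs.add ((hmη i).max measurable_const))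
  have hint_abs : ∀ i, Integrable (fun ω => |ξ i ω|) ℙ := fun i =>
    (((hident i).comp measurable_fst.abs).integrable_iff).mpr hIntξ.abs
  have hint_η : ∀ i, Integrable (fun ω => max (η i ω) 0) ℙ := fun i =>
    (((hident i).comp (measurable_snd.max measurable_const)).integrable_iff).mpr hIntη
  have hZint : ∀ n, Integrable (Z n) ℙ := fun n =>
    integrable_finset_sum _ fun i _ => (hint_abs i).add (hint_η i)
  set Kv : ℝ := mabs + mη with hKv
  have hZint_eq : ∀ n : ℕ, ∫ ω, Z n ω ∂ℙ = n * Kv := by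
    intro n
    have hsum0 : ∫ ω, Z n ω ∂ℙ
        = ∑ i ∈ Finset.range n, ∫ ω, (|ξ i ω| + max (η i ω) 0) ∂ℙ :=
      integral_finset_sum (Finset.range n) (f := fun i ω => |ξ i ω| + max (η i ω) 0)
        (fun i _ => (hint_abs i).add (hint_η i))
    rw [hsum0]
    have h0 : ∀ i, ∫ ω, (|ξ i ω| + max (η i ω) 0) ∂ℙ = Kv := by
      intro i
      rw [integral_add (hint_abs i) (hint_η i), hKv]
      congr 1
      · exact ((hident i).comp measurable_fst.abs).integral_eq
      · exact ((hident i).comp (measurable_snd.max measurable_const)).integral_eq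
    rw [Finset.sum_congr rfl fun i _ => h0 i]
    simp [Finset.sum_const, nsmul_eq_mul]
  have hZnn : ∀ n ω, 0 ≤ Z n ω := fun n ω =>
    Finset.sum_nonneg fun i _ => add_nonneg (abs_nonneg _) (le_max_right _ _)
  have hYleZ : ∀ n ω, Y n ω ≤ Z n ω := by
    intro n ω
    rcases Nat.eq_zero_or_pos n with rfl | hn
    · have h0 : Y 0 ω = 0 := Real.iSup_of_isEmpty _
      rw [h0]
      exact hZnn 0 ω
    · haveI : Nonempty (Fin n) := ⟨⟨0, hn⟩⟩
      apply ciSup_le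
      intro k
      apply max_le _ (hZnn n ω)
      have hsplit : Z n ω = (∑ i ∈ Finset.range n, |ξ i ω|)
          + ∑ i ∈ Finset.range n, max (η i ω) 0 := by
        show (∑ i ∈ Finset.range n, (|ξ i ω| + max (η i ω) 0)) = _
        rw [Finset.sum_add_distrib]
      have hterm1 : ∑ i ∈ Finset.range (k.1 + 1), ξ i ω ≤ ∑ i ∈ Finset.range n, |ξ i ω| := by
        calc ∑ i ∈ Finset.range (k.1 + 1), ξ i ω ≤ ∑ i ∈ Finset.range (k.1 + 1), |ξ i ω| :=
          Finset.sum_le_sum fun i _ => le_abs_self _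
        _ ≤ ∑ i ∈ Finset.range n, |ξ i ω| := by
          apply Finset.sum_le_sum_of_subset_of_nonneg
          · exact Finset.range_subset_range.2 k.2
          · exact fun i _ _ => abs_nonneg _
      have hterm2 : η k.1 ω ≤ ∑ i ∈ Finset.range n, max (η i ω) 0 := by
        calc η k.1 ω ≤ max (η k.1 ω) 0 := le_max_left _ _
        _ ≤ ∑ i ∈ Finset.range n, max (η i ω) 0 :=
          Finset.single_le_sum (f := fun i => max (η i ω) 0)
            (fun i _ => le_max_right _ _) (Finset.mem_range.2 k.2)
      rw [hsplit]
      exact add_le_add hterm1 hterm2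
  have hXint : ∀ n : ℕ, Integrable (fun ω => Y n ω / n) ℙ := by
    intro n
    refine Integrable.mono' ((hZint n).div_const n)
      ((hYmeas n).div_const _).aestronglyMeasurable (ae_of_all _ fun ω => ?_)
    rw [Real.norm_eq_abs, abs_of_nonneg (div_nonneg (hYnn n ω) (Nat.cast_nonneg n)),
      div_eq_mul_inv, div_eq_mul_inv]
    exact mul_le_mul_of_nonneg_right (hYleZ n ω) (inv_nonneg.2 (Nat.cast_nonneg n))
  set g : ℕ → Ω → ℝ := fun n ω => Z n ω / n + c - |Y n ω / n - c| with hg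
  have hgnn : ∀ n ω, 0 ≤ g n ω := by
    intro n ω
    have hx : 0 ≤ Y n ω / n := div_nonneg (hYnn n ω) (Nat.cast_nonneg n)
    have hYZ : Y n ω / n ≤ Z n ω / n := by
      rw [div_eq_mul_inv, div_eq_mul_inv]
      exact mul_le_mul_of_nonneg_right (hYleZ n ω) (inv_nonneg.2 (Nat.cast_nonneg n))
    have habs : |Y n ω / n - c| ≤ Y n ω / n + c :=
      abs_sub_le_iff.2 ⟨by linarith, by linarith⟩
    show 0 ≤ Z n ω / n + c - |Y n ω / n - c|
    linarith
  have hgmeas : ∀ n, Measurable (g n) := fun n =>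
    (((hZmeas n).div_const _).add measurable_const).sub
      ((((hYmeas n).div_const _).sub measurable_const).abs)
  have hgint : ∀ n, Integrable (g n) ℙ := fun n =>
    (((hZint n).div_const _).add (integrable_const c)).sub
      (((hXint n).sub (integrable_const c)).abs)
  set a : ℕ → ℝ := fun n => ∫ ω, |Y n ω / n - c| ∂ℙ with ha
  have hgint_eq : ∀ n : ℕ, 1 ≤ n → ∫ ω, g n ω ∂ℙ = Kv + c - a n := by
    intro n hn
    have hn0 : (n : ℝ) ≠ 0 := by
      have : (0:ℝ) < n := by exact_mod_cast hn
      exact this.ne'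
    have ha' : a n = ∫ ω, |Y n ω / n - c| ∂ℙ := rfl
    rw [ha']
    show ∫ ω, (Z n ω / n + c - |Y n ω / n - c|) ∂ℙ = Kv + c - ∫ ω, |Y n ω / n - c| ∂ℙ
    have hi1 : Integrable (fun ω => Z n ω / n + c) ℙ :=
      ((hZint n).div_const _).add (integrable_const c)
    have hi2 : Integrable (fun ω => |Y n ω / n - c|) ℙ :=
      ((hXint n).sub (integrable_const c)).abs
    have hi3 : Integrable (fun ω => Z n ω / n) ℙ := (hZint n).div_const _
    rw [integral_sub hi1 hi2]
    rw [integral_add hi3 (integrable_const c)]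
    rw [integral_div, hZint_eq n, integral_const]
    simp only [measure_univ, ENNReal.toReal_one, probReal_univ, smul_eq_mul, one_mul]
    rw [mul_comm, mul_div_assoc, div_self hn0, mul_one]
  have hg_lim : ∀ᵐ ω ∂ℙ, Tendsto (fun n : ℕ => g n ω) atTop (𝓝 (Kv + c)) := by
    filter_upwards [E4, E2, main] with ω h4 h2 hm
    have hZlim : Tendsto (fun n : ℕ => Z n ω / n) atTop (𝓝 Kv) := by
      have h0 := h4.add h2
      rw [hKv]
      apply h0.congr
      intro n
      show _ = (∑ i ∈ Finset.range n, (|ξ i ω| + max (η i ω) 0)) / (n : ℝ)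
      rw [Finset.sum_add_distrib, add_div]
    have habs : Tendsto (fun n : ℕ => |Y n ω / n - c|) atTop (𝓝 0) := by
      have h0 := (hm.sub (tendsto_const_nhds (x := c))).abs
      rw [hc] at h0 ⊢
      simpa using h0
    have hfin := (hZlim.add (tendsto_const_nhds (x := c))).sub habs
    rw [sub_zero] at hfin
    exact hfin
  have key : ENNReal.ofReal (Kv + c) ≤
      atTop.liminf (fun n => ENNReal.ofReal (∫ ω, g n ω ∂ℙ)) := by
    have hcongr : (fun ω => atTop.liminf (fun n => ENNReal.ofReal (g n ω)))
        =ᵐ[ℙ] fun _ => ENNReal.ofReal (Kv + c) := by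
      filter_upwards [hg_lim] with ω hω
      exact ((ENNReal.continuous_ofReal.tendsto _).comp hω).liminf_eq
    calc ENNReal.ofReal (Kv + c)
        = ∫⁻ ω, atTop.liminf (fun n => ENNReal.ofReal (g n ω)) ∂ℙ := by
          rw [lintegral_congr_ae hcongr, lintegral_const, measure_univ, mul_one]
    _ ≤ atTop.liminf (fun n => ∫⁻ ω, ENNReal.ofReal (g n ω) ∂ℙ) :=
        lintegral_liminf_le fun n => (hgmeas n).ennreal_ofReal
    _ = atTop.liminf (fun n => ENNReal.ofReal (∫ ω, g n ω ∂ℙ)) := by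
        congr 1
        funext n
        rw [← ofReal_integral_eq_lintegral_ofReal (hgint n) (ae_of_all _ (hgnn n))]
  have hann : ∀ n, 0 ≤ a n := fun n =>
    integral_nonneg (μ := ℙ) (f := fun ω => |Y n ω / n - c|) fun ω => abs_nonneg _
  have haK : ∀ n : ℕ, 1 ≤ n → a n ≤ Kv + c := by
    intro n hn
    have h0 : (0:ℝ) ≤ ∫ ω, g n ω ∂ℙ := integral_nonneg (hgnn n)
    rw [hgint_eq n hn] at h0
    linarith
  show Tendsto a atTop (𝓝 0)
  rw [tendsto_order]
  constructor
  · intro b hb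
    filter_upwards with n
    exact lt_of_lt_of_le hb (hann n)
  · intro b hb
    by_contra hcon
    rw [not_eventually] at hcon
    have hfreq : ∃ᶠ n in atTop, b ≤ a n := hcon.mono fun n hn => not_lt.1 hn
    have hfreq2 : ∃ᶠ n in atTop,
        ENNReal.ofReal (∫ ω, g n ω ∂ℙ) ≤ ENNReal.ofReal (Kv + c - b) := by
      apply (hfreq.and_eventually (eventually_ge_atTop 1)).mono
      rintro n ⟨hbn, hn1⟩
      rw [hgint_eq n hn1]
      exact ENNReal.ofReal_le_ofReal (by linarith)
    have hlim : atTop.liminf (fun n => ENNReal.ofReal (∫ ω, g n ω ∂ℙ)) ≤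
        ENNReal.ofReal (Kv + c - b) := liminf_le_of_frequently_le' hfreq2
    have hKcpos : 0 < Kv + c := by
      obtain ⟨n, hbn, hn1⟩ := (hfreq.and_eventually (eventually_ge_atTop 1)).exists
      have := haK n hn1
      linarith
    have hlt : ENNReal.ofReal (Kv + c - b) < ENNReal.ofReal (Kv + c) :=
      (ENNReal.ofReal_lt_ofReal_iff hKcpos).2 (by linarith)
    exact absurd (lt_of_le_of_lt (key.trans hlim) hlt) (lt_irrefl _)
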